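/- Let (λ, x) be a Laplacian eigenpair of the generalized power hypergraph with loops built from G and d, with λ ≠ d(u) for every u ∈ V, and set U := {u ∈ V : x_{(u,1)} ≠ 0}. Then: (1) U is nonempty and every u ∈ U has a G-neighbor in U (so the induced subgraph G[U] has no isolated vertices); (2) x is nonzero at every vertex of every half edge 𝐮 with u ∈ U, and, setting ε_u := (Π_{p ∈ 𝐮} x_p)/x_{(u,1)}^s for u ∈ U and E := diag(ε_u)_{u∈U}, the vector (x_{(u,1)}^s)_{u∈U} is an eigenvector of the U×U complex matrix diag(d(u))_{u∈U} − E·(A(G)[U])·E with eigenvalue λ, where A(G)[U] is the principal submatrix indexed by U of the adjacency matrix of G. -/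

import Mathlib

open scoped BigOperators
open Matrix

attribute [local instance] Classical.propDecidable

/-- `(lam, x)` is a Laplacian eigenpair of the generalized power hypergraph (with loops)
built from the simple graph `G` and the degree function `d`. -/
def IsLapEigenpair {V : Type*} [Fintype V] [DecidableEq V] (k s : ℕ)
    (G : SimpleGraph V) [DecidableRel G.Adj]
    (d : V → ℕ) (lam : ℂ) (x : V × Fin s → ℂ) : Prop :=
  x ≠ 0 ∧ ∀ (u : V) (v : Fin s),
    ((d u : ℂ) - lam) * x (u, v) ^ (k - 1) =
      ∑ w ∈ G.neighborFinset u,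
        (∏ p ∈ Finset.univ.erase v, x (u, p)) * ∏ q : Fin s, x (w, q)

/-- Let `(λ, x)` be a Laplacian eigenpair of the generalized power hypergraph with loops built
from `G` and `d`, with `λ ≠ d u` for every `u`, and `U := {u | x_{(u,1)} ≠ 0}`. Then `U` is
nonempty, every `u ∈ U` has a `G`-neighbor in `U`, `x` is nonzero on every vertex of every half
edge `𝐮` with `u ∈ U`, and with `ε_u := (Π_{p ∈ 𝐮} x_p)/x_{(u,1)}^s` the vector
`(x_{(u,1)}^s)_{u ∈ U}` is an eigenvector of `diag(d)|_U − E·(A(G)[U])·E` with eigenvalue `λ`. -/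
theorem stmt2 {V : Type*} [Fintype V] [DecidableEq V] (k s : ℕ)
    (hk : 4 ≤ k) (hks : k = 2 * s) (G : SimpleGraph V) [DecidableRel G.Adj]
    (d : V → ℕ) (hd : ∀ u, G.degree u ≤ d u)
    (lam : ℂ) (x : V × Fin s → ℂ) (hpair : IsLapEigenpair k s G d lam x)
    (hlam : ∀ u : V, lam ≠ (d u : ℂ))
    (U : Set V) (hU : U = {u : V | x (u, (⟨0, by omega⟩ : Fin s)) ≠ 0})
    (eps : ↥U → ℂ)
    (heps : ∀ u : ↥U, eps u =
      (∏ p : Fin s, x (u.1, p)) / x (u.1, (⟨0, by omega⟩ : Fin s)) ^ s)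
    (y : ↥U → ℂ) (hy : ∀ u : ↥U, y u = x (u.1, (⟨0, by omega⟩ : Fin s)) ^ s) :
    U.Nonempty ∧
    (∀ u ∈ U, ∃ w ∈ U, G.Adj u w) ∧
    (∀ u ∈ U, ∀ j : Fin s, x (u, j) ≠ 0) ∧
    y ≠ 0 ∧
    (Matrix.diagonal (fun u : ↥U => (d u.1 : ℂ)) -
        Matrix.diagonal eps * (G.adjMatrix ℂ).submatrix Subtype.val Subtype.val *
          Matrix.diagonal eps) *ᵥ y = lam • y := by
  obtain ⟨hx0, heq⟩ := hpair
  have hs : 2 ≤ s := by omega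
  set v0 : Fin s := ⟨0, by omega⟩ with hv0
  have hmemU : ∀ u, u ∈ U ↔ x (u, v0) ≠ 0 := by
    intro u; rw [hU]; exact Iff.rfl
  -- key factorisation lemma
  have key : ∀ (u : V) (v : Fin s), x (u, v) ≠ 0 →
      (∏ p ∈ Finset.univ.erase v, x (u, p)) ≠ 0 ∧
      (∑ w ∈ G.neighborFinset u, ∏ q : Fin s, x (w, q)) ≠ 0 := by
    intro u v hxv
    have h := heq u v
    rw [← Finset.mul_sum] at h
    have hlhs : ((d u : ℂ) - lam) * x (u, v) ^ (k - 1) ≠ 0 :=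
      mul_ne_zero (sub_ne_zero.2 fun hh => (hlam u) hh.symm) (pow_ne_zero _ hxv)
    rw [h] at hlhs
    exact ⟨left_ne_zero_of_mul hlhs, right_ne_zero_of_mul hlhs⟩
  have allnz : ∀ (u : V) (v : Fin s), x (u, v) ≠ 0 → ∀ j, x (u, j) ≠ 0 := by
    intro u v hxv j
    rcases eq_or_ne j v with rfl | hj
    · exact hxv
    · intro hz
      exact (key u v hxv).1
        (Finset.prod_eq_zero (Finset.mem_erase.2 ⟨hj, Finset.mem_univ _⟩) hz)
  have hzero : ∀ w : V, w ∉ U → (∏ q : Fin s, x (w, q)) = 0 := by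
    intro w hw
    have : x (w, v0) = 0 := by
      by_contra hc; exact hw ((hmemU w).2 hc)
    exact Finset.prod_eq_zero (Finset.mem_univ v0) this
  -- (1) nonempty
  obtain ⟨⟨u0, j0⟩, hne⟩ := Function.ne_iff.mp hx0
  have hu0 : u0 ∈ U := (hmemU u0).2 (allnz u0 j0 hne v0)
  -- (2) neighbor
  have hnbr : ∀ u ∈ U, ∃ w ∈ U, G.Adj u w := by
    intro u hu
    have hxu := (hmemU u).1 hu
    obtain ⟨w, hwmem, hwne⟩ :=
      Finset.exists_ne_zero_of_sum_ne_zero (key u v0 hxu).2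
    refine ⟨w, ?_, (SimpleGraph.mem_neighborFinset G u w).1 hwmem⟩
    exact (hmemU w).2 fun hz => hwne (Finset.prod_eq_zero (Finset.mem_univ v0) hz)
  -- (4) y ≠ 0
  have hy0 : y ≠ 0 := by
    intro hyz
    have := congrFun hyz ⟨u0, hu0⟩
    rw [hy] at this
    exact pow_ne_zero s ((hmemU u0).1 hu0) this
  refine ⟨⟨u0, hu0⟩, hnbr, fun u hu j => allnz u v0 ((hmemU u).1 hu) j, hy0, ?_⟩
  -- matrix equation
  funext u
  have hz : x (u.1, v0) ≠ 0 := (hmemU u.1).1 u.2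
  set z : ℂ := x (u.1, v0) with hzdef
  set P : ℂ := ∏ p ∈ Finset.univ.erase v0, x (u.1, p) with hP
  have hprod : (∏ p : Fin s, x (u.1, p)) = z * P :=
    (Finset.mul_prod_erase Finset.univ _ (Finset.mem_univ v0)).symm
  have hepsu : eps u * z ^ (s - 1) = P := by
    rw [heps, hprod]
    have : z ^ s = z * z ^ (s - 1) := by
      rw [← pow_succ']
      congr 1; omega
    rw [this]
    field_simp
  -- the sum over subtype equals the neighbor sum
  have hSsum : (∑ w : ↥U, (G.adjMatrix ℂ).submatrix Subtype.val Subtype.val u w *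
        (eps w * y w)) = ∑ w ∈ G.neighborFinset u.1, ∏ q : Fin s, x (w, q) := by
    have hey : ∀ w : ↥U, eps w * y w = ∏ q : Fin s, x (w.1, q) := by
      intro w
      have hzw : x (w.1, v0) ≠ 0 := (hmemU w.1).1 w.2
      rw [heps, hy, div_mul_cancel₀]
      exact pow_ne_zero s hzw
    calc (∑ w : ↥U, (G.adjMatrix ℂ).submatrix Subtype.val Subtype.val u w * (eps w * y w))
        = ∑ w : ↥U, (if G.Adj u.1 w.1 then ∏ q : Fin s, x (w.1, q) else 0) := by
          refine Finset.sum_congr rfl fun w _ => ?_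
          rw [hey w]
          simp [Matrix.submatrix_apply, SimpleGraph.adjMatrix_apply, ite_mul]
      _ = ∑ w ∈ U.toFinset, (if G.Adj u.1 w then ∏ q : Fin s, x (w, q) else 0) :=
          Finset.sum_set_coe (f := fun w : V => if G.Adj u.1 w then ∏ q : Fin s, x (w, q) else 0) U
      _ = ∑ w : V, (if G.Adj u.1 w then ∏ q : Fin s, x (w, q) else 0) := by
          refine Finset.sum_subset (Finset.subset_univ _) fun w _ hw => ?_
          have hwU : w ∉ U := fun h => hw (Set.mem_toFinset.2 h)
          rw [hzero w hwU]
          simp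
      _ = ∑ w ∈ G.neighborFinset u.1, ∏ q : Fin s, x (w, q) := by
          rw [SimpleGraph.neighborFinset_eq_filter, Finset.sum_filter]
  -- main equation at (u, v0)
  have hmain := heq u.1 v0
  rw [← Finset.mul_sum, ← hSsum] at hmain
  -- compute the mulVec entry
  show ((Matrix.diagonal _ - _) *ᵥ y) u = lam * y u
  rw [Matrix.sub_mulVec, Pi.sub_apply, Matrix.mulVec_diagonal]
  have hEAE : ((Matrix.diagonal eps * (G.adjMatrix ℂ).submatrix Subtype.val Subtype.val *
      Matrix.diagonal eps) *ᵥ y) u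
      = eps u * ∑ w : ↥U, (G.adjMatrix ℂ).submatrix Subtype.val Subtype.val u w *
          (eps w * y w) := by
    have hinner : (Matrix.diagonal eps *ᵥ y) = fun w => eps w * y w := by
      funext w; exact Matrix.mulVec_diagonal _ _ _
    rw [← Matrix.mulVec_mulVec, ← Matrix.mulVec_mulVec, Matrix.mulVec_diagonal, hinner]
    rfl
  rw [hEAE]
  -- now pure algebra
  have hyu : y u = z ^ s := hy u
  have hk1 : z ^ (k - 1) = z ^ s * z ^ (s - 1) := by
    rw [← pow_add]; congr 1; omega
  have hcancel : (((d u.1 : ℂ) - lam) * z ^ s) * z ^ (s - 1)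
      = (eps u * (∑ w : ↥U, (G.adjMatrix ℂ).submatrix Subtype.val Subtype.val u w *
          (eps w * y w))) * z ^ (s - 1) := by
    calc (((d u.1 : ℂ) - lam) * z ^ s) * z ^ (s - 1)
        = ((d u.1 : ℂ) - lam) * z ^ (k - 1) := by rw [hk1]; ring
      _ = P * ∑ w : ↥U, _ := hmain
      _ = _ := by rw [← hepsu]; ring
  have hfin := mul_right_cancel₀ (pow_ne_zero (s - 1) hz) hcancel
  rw [hyu]
  linear_combination hfin
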